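/- For a bounded nonnegative measurable function g and points x, y, the limit as n → ∞ of [(n g(x)+1)² - (n g(y)+1)²]·log((n g(x)+1)/(n g(y)+1))/(n² log n) equals (g(x)² - g(y)²)·(1_{g>0}(x) - 1_{g>0}(y)). -/

import Mathlib

open Filter Real

private lemma tendsto_aux1 (a : ℝ) :
    Tendsto (fun n : ℕ => ((n : ℝ) * a + 1) / n) atTop (nhds a) := by
  have h1 : Tendsto (fun n : ℕ => a + ((n : ℝ))⁻¹) atTop (nhds (a + 0)) :=
    tendsto_const_nhds.add (tendsto_inv_atTop_zero.comp tendsto_natCast_atTop_atTop)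
  rw [add_zero] at h1
  refine h1.congr' ?_
  filter_upwards [eventually_ge_atTop 1] with n hn
  have hn0 : (n : ℝ) ≠ 0 := by
    exact_mod_cast Nat.one_le_iff_ne_zero.mp hn
  field_simp

private lemma tendsto_aux2 {a : ℝ} (ha : 0 ≤ a) :
    Tendsto (fun n : ℕ => Real.log ((n : ℝ) * a + 1) / Real.log n) atTop
      (nhds (if 0 < a then 1 else 0)) := by
  rcases eq_or_lt_of_le ha with h | h
  · simp [← h]
  · rw [if_pos h]
    have hlog : Tendsto (fun n : ℕ => Real.log n) atTop atTop :=
      Real.tendsto_log_atTop.comp tendsto_natCast_atTop_atTop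
    have hi0 : Tendsto (fun n : ℕ => ((n : ℝ))⁻¹) atTop (nhds 0) :=
      tendsto_inv_atTop_zero.comp tendsto_natCast_atTop_atTop
    have hin : Tendsto (fun n : ℕ => a + ((n : ℝ))⁻¹) atTop (nhds (a + 0)) :=
      tendsto_const_nhds.add hi0
    rw [add_zero] at hin
    have h2 : Tendsto (fun n : ℕ => Real.log (a + ((n : ℝ))⁻¹)) atTop
        (nhds (Real.log a)) :=
      ((Real.continuousAt_log (ne_of_gt h)).tendsto).comp hin
    have h3 : Tendsto (fun n : ℕ => 1 + Real.log (a + ((n : ℝ))⁻¹) / Real.log n)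
        atTop (nhds (1 + 0)) :=
      tendsto_const_nhds.add (h2.div_atTop hlog)
    rw [add_zero] at h3
    refine h3.congr' ?_
    filter_upwards [eventually_ge_atTop 2] with n hn
    have hn0 : (0 : ℝ) < n := by positivity
    have hn0' : (n : ℝ) ≠ 0 := ne_of_gt hn0
    have hpos : 0 < a + ((n : ℝ))⁻¹ := by positivity
    have hln : Real.log n ≠ 0 := by
      have : (1 : ℝ) < n := by exact_mod_cast hn
      exact ne_of_gt (Real.log_pos this)
    have key : (n : ℝ) * a + 1 = n * (a + ((n : ℝ))⁻¹) := by field_simp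
    rw [key, Real.log_mul hn0' (ne_of_gt hpos)]
    field_simp

theorem stmt_12 {E : Type*} (g : E → ℝ) (hgpos : ∀ x, 0 ≤ g x)
    (hgb : ∃ M : ℝ, ∀ x, g x ≤ M) (x y : E) :
    Tendsto (fun n : ℕ =>
        ((n * g x + 1) ^ 2 - (n * g y + 1) ^ 2)
          * Real.log ((n * g x + 1) / (n * g y + 1)) / ((n : ℝ) ^ 2 * Real.log n))
      atTop
      (nhds ((g x ^ 2 - g y ^ 2) *
        ((if 0 < g x then (1 : ℝ) else 0) - (if 0 < g y then (1 : ℝ) else 0)))) := by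
  set a := g x
  set b := g y
  have ha := hgpos x
  have hb := hgpos y
  have H1 : Tendsto (fun n : ℕ =>
      (((n : ℝ) * a + 1) / n) ^ 2 - (((n : ℝ) * b + 1) / n) ^ 2) atTop
      (nhds (a ^ 2 - b ^ 2)) :=
    ((tendsto_aux1 a).pow 2).sub ((tendsto_aux1 b).pow 2)
  have H2 : Tendsto (fun n : ℕ =>
      Real.log ((n : ℝ) * a + 1) / Real.log n - Real.log ((n : ℝ) * b + 1) / Real.log n)
      atTop (nhds ((if 0 < a then (1 : ℝ) else 0) - (if 0 < b then (1 : ℝ) else 0))) :=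
    (tendsto_aux2 ha).sub (tendsto_aux2 hb)
  refine (H1.mul H2).congr' ?_
  filter_upwards [eventually_ge_atTop 2] with n hn
  have hn0 : (0 : ℝ) < n := by positivity
  have hn0' : (n : ℝ) ≠ 0 := ne_of_gt hn0
  have hln : Real.log n ≠ 0 := by
    have : (1 : ℝ) < n := by exact_mod_cast hn
    exact ne_of_gt (Real.log_pos this)
  have hA : (0 : ℝ) < (n : ℝ) * a + 1 := by positivity
  have hB : (0 : ℝ) < (n : ℝ) * b + 1 := by positivity
  rw [Real.log_div (ne_of_gt hA) (ne_of_gt hB)]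
  field_simp
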